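/- arXiv:1408.5065 — 3 statements merged into one kernel-verified Lean document; each statement's English description precedes it below -/
import Mathlib

section
/- Let 0 ≤ ξ ≤ ζ < ω₁ be countable ordinals. Then there exists n ∈ ℕ such that every E ∈ 𝓢_ξ with n ≤ min E satisfies E ∈ 𝓢_ζ. -/
open Filter Topology

noncomputable section

/-- The first uncountable ordinal `ω₁`. -/
def omega1 : Ordinal := (Cardinal.aleph 1).ord

/-- The combinatorial operation `𝓕[𝓖]` on families of finite subsets of `ℕ`:
all unions `E₁ ∪ ⋯ ∪ Eₙ` with `E₁ < ⋯ < Eₙ` nonempty members of `𝓖` and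
`(min Eᵢ)ᵢ ∈ 𝓕`. -/
def famOp (F G : Set (Finset ℕ)) : Set (Finset ℕ) :=
  {E | ∃ (n : ℕ) (Es : ℕ → Finset ℕ),
    (∀ i < n, Es i ∈ G) ∧ (∀ i < n, (Es i).Nonempty) ∧
    (∀ i j : ℕ, i < j → j < n → ∀ a ∈ Es i, ∀ b ∈ Es j, a < b) ∧
    (Finset.image (fun i => sInf ((Es i : Set ℕ))) (Finset.range n) ∈ F) ∧
    E = (Finset.range n).biUnion Es}

/-- The first Schreier family `𝓢₁ = {E : |E| ≤ min E}`. -/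
def schreierOne : Set (Finset ℕ) := {E : Finset ℕ | ∀ n ∈ E, E.card ≤ n}


lemma empty_mem_famOp (G : Set (Finset ℕ)) : (∅ : Finset ℕ) ∈ famOp schreierOne G := by
  refine ⟨0, fun _ => ∅, by simp, by simp, by omega, by simp [schreierOne], by simp⟩

lemma self_mem_famOp (G : Set (Finset ℕ)) (E : Finset ℕ) (hE : E ∈ G)
    (h1 : ∀ m ∈ E, 1 ≤ m) : E ∈ famOp schreierOne G := by
  rcases E.eq_empty_or_nonempty with rfl | hne
  · exact empty_mem_famOp G
  refine ⟨1, fun _ => E, fun i _ => hE, fun i _ => hne, by omega, ?_, by simp⟩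
  have hmem : sInf (E : Set ℕ) ∈ E := by
    have := Nat.sInf_mem (s := (E : Set ℕ)) (by exact_mod_cast hne.to_set)
    exact_mod_cast this
  intro n hn
  simp only [Finset.range_one, Finset.image_singleton, Finset.mem_singleton] at hn
  subst hn
  simpa using h1 _ hmem

/-- A system of Schreier families `(𝓢_ξ)` together with the fixed cofinal sequences
`(ξ_n)` used at countable limit ordinals: `𝓢_0 = {∅} ∪ {{n} : n ∈ ℕ}`,
`𝓢_{ξ+1} = 𝓢₁[𝓢_ξ]`, and at a countable limit `ξ`,
`𝓢_ξ = {E : ∃ n, n ≤ min E ∧ E ∈ 𝓢_{ξ_n}}` where `ξ_n ↑ ξ` and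
`𝓢_{ξ_n} ⊆ 𝓢_{ξ_{n+1}}`. -/
structure SchreierSystem where
  S : Ordinal → Set (Finset ℕ)
  seq : Ordinal → ℕ → Ordinal
  S_zero : S 0 = {E : Finset ℕ | E = ∅ ∨ ∃ n : ℕ, E = {n}}
  S_succ : ∀ ξ : Ordinal, S (ξ + 1) = famOp schreierOne (S ξ)
  seq_strictMono : ∀ ξ : Ordinal, ξ < omega1 → Order.IsSuccLimit ξ → StrictMono (seq ξ)
  seq_lt : ∀ ξ : Ordinal, ξ < omega1 → Order.IsSuccLimit ξ → ∀ n : ℕ, seq ξ n < ξ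
  seq_iSup : ∀ ξ : Ordinal, ξ < omega1 → Order.IsSuccLimit ξ → (⨆ n : ℕ, seq ξ n) = ξ
  S_seq_mono : ∀ ξ : Ordinal, ξ < omega1 → Order.IsSuccLimit ξ → ∀ n : ℕ, S (seq ξ n) ⊆ S (seq ξ (n + 1))
  S_limit : ∀ ξ : Ordinal, ξ < omega1 → Order.IsSuccLimit ξ →
    S ξ = {E : Finset ℕ | ∃ n : ℕ, (∀ m ∈ E, n ≤ m) ∧ E ∈ S (seq ξ n)}

/-- For countable ordinals `ξ ≤ ζ < ω₁` there exists `n ∈ ℕ` such that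
every `E ∈ 𝓢_ξ` with `n ≤ min E` satisfies `E ∈ 𝓢_ζ`. -/
theorem statement0 (SS : SchreierSystem) (ξ ζ : Ordinal) (hle : ξ ≤ ζ) (hζ : ζ < omega1) :
    ∃ n : ℕ, ∀ E ∈ SS.S ξ, (∀ m ∈ E, n ≤ m) → E ∈ SS.S ζ := by
  induction ζ using Ordinal.induction with
  | h ζ IH =>
  rcases eq_or_lt_of_le hle with rfl | hlt
  · exact ⟨0, fun E hE _ => hE⟩
  rcases Ordinal.zero_or_succ_or_isSuccLimit ζ with hz | ⟨η, rfl⟩ | hlim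
  · exact absurd (hz ▸ hlt) (not_lt_zero (a := ξ))
  · have hη : η < η + 1 := Order.lt_succ η
    have hηω : η < omega1 := hη.trans hζ
    have hξη : ξ ≤ η := Order.lt_succ_iff.mp hlt
    obtain ⟨n, hn⟩ := IH η hη hξη hηω
    refine ⟨max n 1, fun E hE hmin => ?_⟩
    have hEη : E ∈ SS.S η := hn E hE (fun m hm => le_trans (le_max_left _ _) (hmin m hm))
    rw [show Order.succ η = η + 1 from rfl, SS.S_succ]
    exact self_mem_famOp _ E hEη (fun m hm => le_trans (le_max_right _ _) (hmin m hm))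
  · have hsup := SS.seq_iSup ζ hζ hlim
    have : ∃ k : ℕ, ξ ≤ SS.seq ζ k := by
      by_contra h
      push_neg at h
      have : (⨆ k : ℕ, SS.seq ζ k) ≤ ξ := ciSup_le' (fun k => (h k).le)
      rw [hsup] at this
      exact absurd (lt_of_lt_of_le hlt this) (lt_irrefl ξ)
    obtain ⟨k, hk⟩ := this
    obtain ⟨n, hn⟩ := IH (SS.seq ζ k) (SS.seq_lt ζ hζ hlim k) hk
      ((SS.seq_lt ζ hζ hlim k).trans hζ)
    refine ⟨max n k, fun E hE hmin => ?_⟩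
    rw [SS.S_limit ζ hζ hlim]
    exact ⟨k, fun m hm => le_trans (le_max_right _ _) (hmin m hm),
      hn E hE (fun m hm => le_trans (le_max_left _ _) (hmin m hm))⟩
end
end

section
/- Let 0 ≤ ξ, ζ < ω₁ be countable ordinals and let M ⊆ ℕ be infinite. Then there exists an infinite L ⊆ M such that 𝓢_ξ(L)[𝓢_ζ] ⊆ 𝓢_{ζ+ξ}, and this inclusion still holds when L is replaced by any spread of L. -/
open Filter Topology

noncomputable section

/-- The image family `𝓕(g) = {g(E) : E ∈ 𝓕}` of a family under a map `g : ℕ → ℕ`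
(for a strictly monotone `g` this is `𝓕(M)` where `M = g(ℕ)`). -/
def famMap (g : ℕ → ℕ) (F : Set (Finset ℕ)) : Set (Finset ℕ) :=
  (fun E : Finset ℕ => E.image g) '' F

namespace Statement1Aux

lemma sInf_mem_finset {s : Finset ℕ} (h : s.Nonempty) : sInf (s : Set ℕ) ∈ s := by
  have : sInf (s : Set ℕ) ∈ (s : Set ℕ) := Nat.sInf_mem (by exact_mod_cast h)
  exact_mod_cast this

lemma sInf_le_finset {s : Finset ℕ} {a : ℕ} (h : a ∈ s) : sInf (s : Set ℕ) ≤ a :=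
  Nat.sInf_le (by exact_mod_cast h)

lemma sInf_lt_sInf {Es : ℕ → Finset ℕ} {n i j : ℕ}
    (hne : ∀ i < n, (Es i).Nonempty)
    (hinc : ∀ i j : ℕ, i < j → j < n → ∀ a ∈ Es i, ∀ b ∈ Es j, a < b)
    (hij : i < j) (hj : j < n) :
    sInf ((Es i : Set ℕ)) < sInf ((Es j : Set ℕ)) := by
  have hi : i < n := hij.trans hj
  have h1 : sInf ((Es i : Set ℕ)) ∈ Es i := sInf_mem_finset (hne i hi)
  have h2 : sInf ((Es j : Set ℕ)) ∈ Es j := sInf_mem_finset (hne j hj)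
  exact hinc i j hij hj _ h1 _ h2

lemma card_mins {Es : ℕ → Finset ℕ} {n : ℕ}
    (hne : ∀ i < n, (Es i).Nonempty)
    (hinc : ∀ i j : ℕ, i < j → j < n → ∀ a ∈ Es i, ∀ b ∈ Es j, a < b) :
    ((Finset.range n).image (fun i => sInf ((Es i : Set ℕ)))).card = n := by
  rw [Finset.card_image_of_injOn, Finset.card_range]
  intro i hi j hj hij
  simp only [Finset.coe_range, Set.mem_Iio] at hi hj
  by_contra hne'
  rcases lt_or_gt_of_ne hne' with h | h
  · exact absurd hij (ne_of_lt (sInf_lt_sInf hne hinc h hj))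
  · exact absurd hij.symm (ne_of_lt (sInf_lt_sInf hne hinc h hi))

/-- Membership in `famOp` from data indexed by an arbitrary finite index set. -/
lemma famOp_indexed (F G : Set (Finset ℕ)) (I : Finset ℕ) (Es : ℕ → Finset ℕ)
    (h1 : ∀ i ∈ I, Es i ∈ G) (h2 : ∀ i ∈ I, (Es i).Nonempty)
    (h3 : ∀ i ∈ I, ∀ j ∈ I, i < j → ∀ a ∈ Es i, ∀ b ∈ Es j, a < b)
    (h4 : I.image (fun i => sInf ((Es i : Set ℕ))) ∈ F) :
    I.biUnion Es ∈ famOp F G := by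
  classical
  set m := I.card with hm
  set e : Fin m ↪o ℕ := I.orderEmbOfFin rfl with he
  have hmem : ∀ t : Fin m, e t ∈ I := fun t => I.orderEmbOfFin_mem rfl t
  have hsurj : ∀ i ∈ I, ∃ t : Fin m, e t = i := by
    intro i hi
    have : (i : ℕ) ∈ Set.range e := by
      rw [he, Finset.range_orderEmbOfFin]; exact_mod_cast hi
    exact this
  refine ⟨m, fun t => if h : t < m then Es (e ⟨t, h⟩) else ∅, ?_, ?_, ?_, ?_, ?_⟩
  · intro i hi; simp only [hi, dif_pos]; exact h1 _ (hmem _)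
  · intro i hi; simp only [hi, dif_pos]; exact h2 _ (hmem _)
  · intro i j hij hj a ha b hb
    have hi : i < m := hij.trans hj
    simp only [hi, dif_pos] at ha
    simp only [hj, dif_pos] at hb
    have : e ⟨i, hi⟩ < e ⟨j, hj⟩ := e.strictMono (by exact_mod_cast hij)
    exact h3 _ (hmem _) _ (hmem _) this a ha b hb
  · have heq : (Finset.range m).image
        (fun t => sInf (((if h : t < m then Es (e ⟨t, h⟩) else ∅) : Finset ℕ) : Set ℕ))
        = I.image (fun i => sInf ((Es i : Set ℕ))) := by
      apply Finset.ext
      intro x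
      simp only [Finset.mem_image, Finset.mem_range]
      constructor
      · rintro ⟨t, ht, hx⟩
        simp only [ht, dif_pos] at hx
        exact ⟨e ⟨t, ht⟩, hmem _, hx⟩
      · rintro ⟨i, hi, hx⟩
        obtain ⟨t, ht⟩ := hsurj i hi
        refine ⟨t, t.isLt, ?_⟩
        simp only [t.isLt, dif_pos]
        rw [Fin.eta, ht]
        exact hx
    rw [heq]; exact h4
  · apply Finset.ext
    intro a
    simp only [Finset.mem_biUnion, Finset.mem_range]
    constructor
    · rintro ⟨i, hi, ha⟩
      obtain ⟨t, ht⟩ := hsurj i hi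
      refine ⟨t, t.isLt, ?_⟩
      simp only [t.isLt, dif_pos, Fin.eta, ht]
      exact ha
    · rintro ⟨t, ht, ha⟩
      simp only [ht, dif_pos] at ha
      exact ⟨e ⟨t, ht⟩, hmem _, ha⟩

lemma exists_phi {L' : ℕ → ℕ} (hL' : StrictMono L') {n : ℕ} {Es : ℕ → Finset ℕ} {F : Finset ℕ}
    (hne : ∀ i < n, (Es i).Nonempty)
    (hinc : ∀ i j : ℕ, i < j → j < n → ∀ a ∈ Es i, ∀ b ∈ Es j, a < b)
    (him : F.image L' = (Finset.range n).image (fun i => sInf ((Es i : Set ℕ)))) :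
    ∃ φ : ℕ → ℕ, (∀ i < n, φ i ∈ F) ∧ (∀ i < n, L' (φ i) = sInf ((Es i : Set ℕ))) ∧
      (∀ i j : ℕ, i < j → j < n → φ i < φ j) ∧ F = (Finset.range n).image φ := by
  classical
  have hex : ∀ i : ℕ, ∃ x : ℕ, i < n → (x ∈ F ∧ L' x = sInf ((Es i : Set ℕ))) := by
    intro i
    by_cases hi : i < n
    · have : sInf ((Es i : Set ℕ)) ∈ F.image L' := by
        rw [him]; exact Finset.mem_image_of_mem _ (Finset.mem_range.mpr hi)
      obtain ⟨x, hx, hxe⟩ := Finset.mem_image.mp this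
      exact ⟨x, fun _ => ⟨hx, hxe⟩⟩
    · exact ⟨0, fun h => absurd h hi⟩
  choose φ hφ using hex
  have hφF : ∀ i < n, φ i ∈ F := fun i hi => (hφ i hi).1
  have hφv : ∀ i < n, L' (φ i) = sInf ((Es i : Set ℕ)) := fun i hi => (hφ i hi).2
  have hφmono : ∀ i j : ℕ, i < j → j < n → φ i < φ j := by
    intro i j hij hj
    have h := sInf_lt_sInf hne hinc hij hj
    rw [← hφv i (hij.trans hj), ← hφv j hj] at h
    exact hL'.lt_iff_lt.mp h
  refine ⟨φ, hφF, hφv, hφmono, ?_⟩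
  have h2 : F.image L' = ((Finset.range n).image φ).image L' := by
    rw [Finset.image_image, him]
    apply Finset.image_congr
    intro i hi
    simp only [Finset.coe_range, Set.mem_Iio] at hi
    exact (hφv i hi).symm
  exact Finset.image_injective hL'.injective h2

lemma le_of_range_subset {f g : ℕ → ℕ} (hf : StrictMono f) (hg : StrictMono g)
    (h : ∀ m, g m ∈ Set.range f) : ∀ m, f m ≤ g m := by
  intro m
  induction m with
  | zero =>
    obtain ⟨t, ht⟩ := h 0
    rw [← ht]; exact hf.monotone (Nat.zero_le t)
  | succ m ih =>
    obtain ⟨t, ht⟩ := h (m + 1)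
    have h1 : f m < f t := by rw [ht]; exact lt_of_le_of_lt ih (hg (Nat.lt_succ_self m))
    have h2 : m < t := hf.lt_iff_lt.mp h1
    rw [← ht]; exact hf.monotone h2

lemma mem_lower {L' : ℕ → ℕ} (hL' : StrictMono L') {n : ℕ} {Es : ℕ → Finset ℕ} {F : Finset ℕ}
    (him : F.image L' = (Finset.range n).image (fun i => sInf ((Es i : Set ℕ))))
    {c : ℕ} (hc : ∀ x ∈ F, c ≤ x) :
    ∀ a ∈ (Finset.range n).biUnion Es, L' c ≤ a := by
  intro a ha
  obtain ⟨i, hi, hai⟩ := Finset.mem_biUnion.mp ha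
  have h1 : sInf ((Es i : Set ℕ)) ≤ a := sInf_le_finset hai
  have h2 : sInf ((Es i : Set ℕ)) ∈ F.image L' := by
    rw [him]; exact Finset.mem_image_of_mem _ hi
  obtain ⟨x, hx, hxe⟩ := Finset.mem_image.mp h2
  calc L' c ≤ L' x := hL'.monotone (hc x hx)
    _ = sInf ((Es i : Set ℕ)) := hxe
    _ ≤ a := h1

lemma add_lt_omega1 {a b : Ordinal} (ha : a < omega1) (hb : b < omega1) : a + b < omega1 := by
  rw [omega1, Cardinal.lt_ord] at *
  rw [Ordinal.card_add]
  exact Cardinal.add_lt_of_lt (Cardinal.aleph0_le_aleph 1) ha hb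

lemma empty_mem (SS : SchreierSystem) : ∀ ξ : Ordinal, ξ < omega1 → (∅ : Finset ℕ) ∈ SS.S ξ := by
  intro ξ
  induction ξ using Ordinal.induction with
  | h ξ IH =>
  intro hξ
  rcases Ordinal.zero_or_succ_or_isSuccLimit ξ with h0 | ⟨γ, hγ⟩ | hlim
  · subst h0; rw [SS.S_zero]; exact Or.inl rfl
  · rw [← Ordinal.add_one_eq_succ] at hγ; subst hγ; rw [SS.S_succ]
    refine ⟨0, fun _ => ∅, ?_, ?_, ?_, ?_, ?_⟩ <;> simp [schreierOne]
  · rw [SS.S_limit ξ hξ hlim]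
    exact ⟨0, by simp, IH _ (SS.seq_lt ξ hξ hlim 0) ((SS.seq_lt ξ hξ hlim 0).trans hξ)⟩

theorem master (SS : SchreierSystem) (ζ : Ordinal) (hζ : ζ < omega1) (η : Ordinal) :
    η < omega1 → ∀ ξ : Ordinal, ξ ≤ η →
    ∀ M : ℕ → ℕ, StrictMono M →
    ∃ L : ℕ → ℕ, StrictMono L ∧ (∀ n : ℕ, L n ∈ Set.range M) ∧
      ∀ L' : ℕ → ℕ, StrictMono L' → (∀ n : ℕ, L n ≤ L' n) →
        famOp (famMap L' (SS.S ξ)) (SS.S ζ) ⊆ SS.S (ζ + η) := by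
  induction η using Ordinal.induction with
  | h η IH =>
  intro hη ξ hξη M hM
  rcases Ordinal.zero_or_succ_or_isSuccLimit η with h0 | ⟨γ, hγ⟩ | hlim
  · -- base case η = 0, so ξ = 0
    subst h0
    have hξ0 : ξ = 0 := nonpos_iff_eq_zero.mp hξη
    subst hξ0
    refine ⟨M, hM, fun n => ⟨n, rfl⟩, ?_⟩
    intro L' hL' hLL' E hE
    obtain ⟨n, Es, hGz, hne, hinc, hmins, hEeq⟩ := hE
    obtain ⟨F, hF, hFim⟩ := hmins
    rw [add_zero]
    rw [SS.S_zero] at hF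
    rcases hF with hF0 | ⟨m, hFm⟩
    · subst hF0
      simp only [Finset.image_empty] at hFim
      have hn0 : n = 0 := by
        by_contra hn
        have h1 : (0:ℕ) ∈ Finset.range n := Finset.mem_range.mpr (Nat.pos_of_ne_zero hn)
        have h2 := Finset.mem_image_of_mem (fun i => sInf ((Es i : Set ℕ))) h1
        rw [← hFim] at h2
        exact absurd h2 (Finset.notMem_empty _)
      subst hn0
      simp only [Finset.range_zero, Finset.biUnion_empty] at hEeq
      rw [hEeq]; exact empty_mem SS ζ hζ
    · subst hFm
      have hcard : ((Finset.range n).image (fun i => sInf ((Es i : Set ℕ)))).card = n :=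
        card_mins hne hinc
      rw [← hFim] at hcard
      simp only [Finset.image_singleton, Finset.card_singleton] at hcard
      have hn1 : n = 1 := hcard.symm
      subst hn1
      have hE1 : E = Es 0 := by rw [hEeq]; simp
      rw [hE1]
      exact hGz 0 (by norm_num)
  · -- successor case η = γ + 1
    rw [← Ordinal.add_one_eq_succ] at hγ
    subst hγ
    have hγη : γ < γ + 1 := by
      rw [Ordinal.add_one_eq_succ]; exact Order.lt_succ γ
    have hγω : γ < omega1 := hγη.trans hη
    rcases lt_or_eq_of_le hξη with hlt | heq
    · -- ξ ≤ γ : wrap as a single block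
      have hξγ : ξ ≤ γ := by
        rw [Ordinal.add_one_eq_succ] at hlt
        exact Order.lt_succ_iff.mp hlt
      obtain ⟨L0, hL0m, hL0r, hL0p⟩ := IH γ hγη hγω ξ hξγ M hM
      refine ⟨fun n => L0 (n + 1), hL0m.comp (fun a b h => by omega),
        fun n => hL0r (n + 1), ?_⟩
      intro L' hL' hLL' E hE
      have hsp : ∀ n, L0 n ≤ L' n := fun n =>
        le_trans (hL0m.monotone (Nat.le_succ n)) (hLL' n)
      have hEγ : E ∈ SS.S (ζ + γ) := hL0p L' hL' hsp hE
      rw [← add_assoc, SS.S_succ]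
      rcases Finset.eq_empty_or_nonempty E with hE0 | hEne
      · subst hE0
        refine ⟨0, fun _ => ∅, ?_, ?_, ?_, ?_, ?_⟩ <;> simp [schreierOne]
      · obtain ⟨n, Es, hGz, hne, hinc, hmins, hEeq⟩ := hE
        obtain ⟨F, hF, hFim⟩ := hmins
        have hbound : ∀ a ∈ E, L' 0 ≤ a := by
          rw [hEeq]
          exact mem_lower hL' hFim (fun x _ => Nat.zero_le x)
        have h2 : 1 ≤ L' 0 := by
          have h3 : L0 1 ≤ L' 0 := hLL' 0
          have h4 : L0 0 < L0 1 := hL0m Nat.zero_lt_one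
          omega
        have h1le : 1 ≤ sInf ((E : Set ℕ)) :=
          le_trans h2 (hbound _ (sInf_mem_finset hEne))
        refine ⟨1, fun _ => E, fun i _ => hEγ, fun i _ => hEne, ?_, ?_, ?_⟩
        · intro i j hij hj; omega
        · simp only [schreierOne, Set.mem_setOf_eq]
          intro x hx
          simp only [Finset.range_one, Finset.image_singleton, Finset.mem_singleton] at hx ⊢
          rw [Finset.card_singleton, hx]
          exact h1le
        · simp
    · -- ξ = γ + 1 : grouping argument
      subst heq
      obtain ⟨L, hLm, hLr, hLp⟩ := IH γ hγη hγω γ le_rfl M hM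
      refine ⟨L, hLm, hLr, ?_⟩
      intro L' hL' hLL' E hE
      obtain ⟨n, Es, hGz, hne, hinc, hmins, hEeq⟩ := hE
      obtain ⟨F, hF, hFim⟩ := hmins
      rw [SS.S_succ] at hF
      obtain ⟨k, Fs, hFg, hFne, hFinc, hFmins, hFeq⟩ := hF
      obtain ⟨φ, hφF, hφv, hφmono, hφim⟩ := exists_phi hL' hne hinc hFim
      rw [← add_assoc, SS.S_succ]
      set Ij : ℕ → Finset ℕ := fun j => (Finset.range n).filter (fun i => φ i ∈ Fs j) with hIj
      set Gs : ℕ → Finset ℕ := fun j => (Ij j).biUnion Es with hGs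
      have hFsF : ∀ j < k, ∀ x ∈ Fs j, x ∈ F := by
        intro j hj x hx
        rw [hFeq]
        exact Finset.mem_biUnion.mpr ⟨j, Finset.mem_range.mpr hj, hx⟩
      have hsurj : ∀ j < k, ∀ x ∈ Fs j, ∃ i ∈ Ij j, φ i = x := by
        intro j hj x hx
        have hxF : x ∈ F := hFsF j hj x hx
        rw [hφim] at hxF
        obtain ⟨i, hi, hφi⟩ := Finset.mem_image.mp hxF
        exact ⟨i, Finset.mem_filter.mpr ⟨hi, by rw [hφi]; exact hx⟩, hφi⟩
      have hIjn : ∀ j, ∀ i ∈ Ij j, i < n := fun j i hi =>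
        Finset.mem_range.mp (Finset.mem_filter.mp hi).1
      have hIjφ : ∀ j, ∀ i ∈ Ij j, φ i ∈ Fs j := fun j i hi => (Finset.mem_filter.mp hi).2
      have hGne : ∀ j < k, (Gs j).Nonempty := by
        intro j hj
        obtain ⟨x, hx⟩ := hFne j hj
        obtain ⟨i, hiI, _⟩ := hsurj j hj x hx
        obtain ⟨a, ha⟩ := hne i (hIjn j i hiI)
        exact ⟨a, Finset.mem_biUnion.mpr ⟨i, hiI, ha⟩⟩
      have hkFs : ∀ j < k, k ≤ sInf ((Fs j : Set ℕ)) := by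
        intro j hj
        have hcard := card_mins hFne hFinc
        have hmem : sInf ((Fs j : Set ℕ)) ∈
            (Finset.range k).image (fun j => sInf ((Fs j : Set ℕ))) :=
          Finset.mem_image_of_mem _ (Finset.mem_range.mpr hj)
        have h := hFmins _ hmem
        rwa [hcard] at h
      have hGmem : ∀ j < k, Gs j ∈ SS.S (ζ + γ) := by
        intro j hj
        apply hLp L' hL' hLL'
        apply famOp_indexed
        · intro i hi; exact hGz i (hIjn j i hi)
        · intro i hi; exact hne i (hIjn j i hi)
        · intro i hi i' hi' hii' a ha b hb
          exact hinc i i' hii' (hIjn j i' hi') a ha b hb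
        · refine ⟨Fs j, hFg j hj, ?_⟩
          apply Finset.ext; intro x
          simp only [Finset.mem_image]
          constructor
          · rintro ⟨y, hy, hyx⟩
            obtain ⟨i, hiI, hφi⟩ := hsurj j hj y hy
            exact ⟨i, hiI, by rw [← hyx, ← hφi]; exact (hφv i (hIjn j i hiI)).symm⟩
          · rintro ⟨i, hiI, hix⟩
            exact ⟨φ i, hIjφ j i hiI, by rw [hφv i (hIjn j i hiI)]; exact hix⟩
      have hGinc : ∀ j j' : ℕ, j < j' → j' < k → ∀ a ∈ Gs j, ∀ b ∈ Gs j', a < b := by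
        intro j j' hjj' hj' a ha b hb
        obtain ⟨i, hiI, hai⟩ := Finset.mem_biUnion.mp ha
        obtain ⟨i', hiI', hbi'⟩ := Finset.mem_biUnion.mp hb
        have hφφ : φ i < φ i' := hFinc j j' hjj' hj' _ (hIjφ j i hiI) _ (hIjφ j' i' hiI')
        have hii' : i < i' := by
          by_contra hcon
          push_neg at hcon
          rcases lt_or_eq_of_le hcon with h | h
          · exact absurd hφφ (asymm (hφmono i' i h (hIjn j i hiI)))
          · rw [h] at hφφ; exact lt_irrefl _ hφφ
        exact hinc i i' hii' (hIjn j' i' hiI') a hai b hbi'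
      have hGlow : ∀ j < k, k ≤ sInf ((Gs j : Set ℕ)) := by
        intro j hj
        have hmem := sInf_mem_finset (hGne j hj)
        obtain ⟨i, hiI, hai⟩ := Finset.mem_biUnion.mp hmem
        have h1 : sInf ((Es i : Set ℕ)) ≤ sInf ((Gs j : Set ℕ)) := sInf_le_finset hai
        have h2 : L' (φ i) = sInf ((Es i : Set ℕ)) := hφv i (hIjn j i hiI)
        have h3 : φ i ≤ L' (φ i) := hL'.le_apply
        have h4 : sInf ((Fs j : Set ℕ)) ≤ φ i := sInf_le_finset (hIjφ j i hiI)
        have h5 := hkFs j hj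
        omega
      refine ⟨k, Gs, hGmem, hGne, hGinc, ?_, ?_⟩
      · simp only [schreierOne, Set.mem_setOf_eq]
        intro x hx
        obtain ⟨j, hj, hjx⟩ := Finset.mem_image.mp hx
        have hjk := Finset.mem_range.mp hj
        calc ((Finset.range k).image (fun j => sInf ((Gs j : Set ℕ)))).card
            ≤ (Finset.range k).card := Finset.card_image_le
          _ = k := Finset.card_range k
          _ ≤ x := by rw [← hjx]; exact hGlow j hjk
      · rw [hEeq]
        apply Finset.ext; intro a
        simp only [Finset.mem_biUnion, Finset.mem_range]
        constructor
        · rintro ⟨i, hi, hai⟩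
          have hφiF : φ i ∈ F := hφF i hi
          rw [hFeq] at hφiF
          obtain ⟨j, hj, hφij⟩ := Finset.mem_biUnion.mp hφiF
          exact ⟨j, Finset.mem_range.mp hj,
            Finset.mem_biUnion.mpr ⟨i, Finset.mem_filter.mpr
              ⟨Finset.mem_range.mpr hi, hφij⟩, hai⟩⟩
        · rintro ⟨j, hj, haG⟩
          obtain ⟨i, hiI, hai⟩ := Finset.mem_biUnion.mp haG
          exact ⟨i, hIjn j i hiI, hai⟩
  · -- limit case
    have hζη : ζ + η < omega1 := add_lt_omega1 hζ hη
    have hl2 : Order.IsSuccLimit (ζ + η) := Ordinal.isSuccLimit_add ζ hlim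
    have hsup := SS.seq_iSup (ζ + η) hζη hl2
    have hseqlt := SS.seq_lt (ζ + η) hζη hl2
    have hfind : ∀ a : Ordinal, a < ζ + η → ∃ q : ℕ, a < SS.seq (ζ + η) q := by
      intro a ha
      by_contra hcon
      push_neg at hcon
      have h := ciSup_le hcon
      rw [hsup] at h
      exact absurd ha (not_lt.mpr h)
    rcases lt_or_eq_of_le hξη with hlt | heq
    · -- ξ < η : single cofinal index suffices
      obtain ⟨q, hq⟩ := hfind (ζ + ξ) ((add_lt_add_iff_left ζ).mpr hlt)
      have hζle : ζ ≤ SS.seq (ζ + η) q := le_trans (le_self_add (a := ζ) (b := ξ)) hq.le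
      have hγeq : ζ + (SS.seq (ζ + η) q - ζ) = SS.seq (ζ + η) q :=
        Ordinal.add_sub_cancel_of_le hζle
      set γ := SS.seq (ζ + η) q - ζ with hγdef
      have hγlt : γ < η := by
        have h1 : ζ + γ < ζ + η := by rw [hγeq]; exact hseqlt q
        exact (add_lt_add_iff_left ζ).mp h1
      have hξγ : ξ ≤ γ := by
        have h1 : ζ + ξ < ζ + γ := by rw [hγeq]; exact hq
        exact ((add_lt_add_iff_left ζ).mp h1).le
      obtain ⟨L0, hL0m, hL0r, hL0p⟩ := IH γ hγlt (hγlt.trans hη) ξ hξγ M hM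
      refine ⟨fun m => L0 (m + q), hL0m.comp (fun a b h => by omega),
        fun m => hL0r (m + q), ?_⟩
      intro L' hL' hLL' E hE
      have hsp : ∀ m, L0 m ≤ L' m := fun m =>
        le_trans (hL0m.monotone (Nat.le_add_right m q)) (hLL' m)
      have hEγ : E ∈ SS.S (ζ + γ) := hL0p L' hL' hsp hE
      rw [SS.S_limit (ζ + η) hζη hl2]
      refine ⟨q, ?_, by rw [← hγeq]; exact hEγ⟩
      obtain ⟨nb, Es, hGz2, hne2, hinc2, hmins2, hEeq2⟩ := hE
      obtain ⟨F, hF2, hFim2⟩ := hmins2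
      intro a ha
      have h1 : L' 0 ≤ a := by
        rw [hEeq2] at ha
        exact mem_lower hL' hFim2 (fun x _ => Nat.zero_le x) a ha
      have h2 : q ≤ L0 q := hL0m.le_apply
      have h3 := hLL' 0
      simp only [Nat.zero_add] at h3
      omega
    · -- ξ = η : diagonalization
      subst heq
      have hexp : ∀ n : ℕ, ∃ q : ℕ, ζ + SS.seq ξ n < SS.seq (ζ + ξ) q := by
        intro n
        exact hfind _ ((add_lt_add_iff_left ζ).mpr (SS.seq_lt ξ hη hlim n))
      choose p hp using hexp
      have hζle : ∀ n, ζ ≤ SS.seq (ζ + ξ) (p n) := fun n =>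
        le_trans le_self_add (hp n).le
      have hγeq : ∀ n, ζ + (SS.seq (ζ + ξ) (p n) - ζ) = SS.seq (ζ + ξ) (p n) := fun n =>
        Ordinal.add_sub_cancel_of_le (hζle n)
      set γ : ℕ → Ordinal := fun n => SS.seq (ζ + ξ) (p n) - ζ with hγdef
      have hγlt : ∀ n, γ n < ξ := by
        intro n
        have h1 : ζ + γ n < ζ + ξ := by rw [hγeq n]; exact hseqlt (p n)
        exact (add_lt_add_iff_left ζ).mp h1
      have hsle : ∀ n, SS.seq ξ n ≤ γ n := by
        intro n
        have h1 : ζ + SS.seq ξ n < ζ + γ n := by rw [hγeq n]; exact hp n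
        exact ((add_lt_add_iff_left ζ).mp h1).le
      have hstep : ∀ (n : ℕ) (f : ℕ → ℕ), StrictMono f → (∀ m, f m ∈ Set.range M) →
          ∃ g : ℕ → ℕ, (StrictMono g ∧ ∀ m, g m ∈ Set.range f) ∧
            ∀ L' : ℕ → ℕ, StrictMono L' → (∀ m, g m ≤ L' m) →
              famOp (famMap L' (SS.S (SS.seq ξ n))) (SS.S ζ) ⊆ SS.S (ζ + γ n) := by
        intro n f hf hfr
        obtain ⟨g, hg1, hg2, hg3⟩ := IH (γ n) (hγlt n) ((hγlt n).trans hη) (SS.seq ξ n)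
          (hsle n) f hf
        exact ⟨g, ⟨hg1, hg2⟩, hg3⟩
      choose! gf hgf1 hgf2 using hstep
      set G : ℕ → ℕ → ℕ := fun n => Nat.rec (gf 0 M) (fun k Gk => gf (k + 1) Gk) n with hGdef
      have hGprop : ∀ n, StrictMono (G n) ∧ (∀ m, G n m ∈ Set.range M) := by
        intro n
        induction n with
        | zero =>
          have h := hgf1 0 M hM (fun m => ⟨m, rfl⟩)
          exact ⟨h.1, h.2⟩
        | succ n ih =>
          have h := hgf1 (n + 1) (G n) ih.1 ih.2
          refine ⟨h.1, fun m => ?_⟩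
          obtain ⟨t, ht⟩ := h.2 m
          show gf (n + 1) (G n) m ∈ Set.range M
          rw [← ht]; exact ih.2 t
      have hGm : ∀ n, StrictMono (G n) := fun n => (hGprop n).1
      have hGr : ∀ n m, G n m ∈ Set.range M := fun n => (hGprop n).2
      have hGstep : ∀ n m, G n m ≤ G (n + 1) m := fun n =>
        le_of_range_subset (hGm n) (hGm (n + 1)) (hgf1 (n + 1) (G n) (hGm n) (hGr n)).2
      have hGle : ∀ k n, k ≤ n → ∀ m, G k m ≤ G n m := by
        intro k n hkn m
        induction n, hkn using Nat.le_induction with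
        | base => exact le_rfl
        | succ n hkn ih => exact le_trans ih (hGstep n m)
      have hGP : ∀ n, ∀ L' : ℕ → ℕ, StrictMono L' → (∀ m, G n m ≤ L' m) →
          famOp (famMap L' (SS.S (SS.seq ξ n))) (SS.S ζ) ⊆ SS.S (ζ + γ n) := by
        intro n
        cases n with
        | zero => exact hgf2 0 M hM (fun m => ⟨m, rfl⟩)
        | succ n => exact hgf2 (n + 1) (G n) (hGm n) (hGr n)
      set c : ℕ → ℕ := fun n => Nat.rec (p 0) (fun k ck => max (p (k + 1)) (ck + 1)) n
        with hcdef
      have hcmono : StrictMono c := by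
        apply strictMono_nat_of_lt_succ
        intro n
        exact lt_of_lt_of_le (Nat.lt_succ_self _) (le_max_right _ _)
      have hcp : ∀ n, p n ≤ c n := by
        intro n
        cases n with
        | zero => exact le_rfl
        | succ n => exact le_max_left _ _
      have hcn : ∀ n, n ≤ c n := fun n => hcmono.le_apply
      refine ⟨fun n => G n (c n), ?_, fun n => hGr n (c n), ?_⟩
      · apply strictMono_nat_of_lt_succ
        intro n
        calc G n (c n) < G n (c (n + 1)) := (hGm n) (hcmono (Nat.lt_succ_self n))
          _ ≤ G (n + 1) (c (n + 1)) := hGstep n _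
      intro L' hL' hLL' E hE
      obtain ⟨nb, Es, hGz2, hne2, hinc2, hmins2, hEeq2⟩ := hE
      obtain ⟨F, hF2, hFim2⟩ := hmins2
      rw [SS.S_limit ξ hη hlim] at hF2
      obtain ⟨n, hFlow, hFn⟩ := hF2
      set L'' : ℕ → ℕ := fun i => if i < n then G n i else L' i with hL''def
      have hL''m : StrictMono L'' := by
        intro i j hij
        by_cases hj : j < n
        · have hi : i < n := hij.trans hj
          simp only [hL''def, if_pos hi, if_pos hj]
          exact (hGm n) hij
        · by_cases hi : i < n
          · simp only [hL''def, if_pos hi, if_neg hj]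
            have h1 : G n i < G n n := (hGm n) hi
            have h2 : G n n ≤ G n (c n) := (hGm n).monotone (hcn n)
            have h3 : G n (c n) ≤ L' n := hLL' n
            have h4 : L' n ≤ L' j := hL'.monotone (not_lt.mp hj)
            omega
          · simp only [hL''def, if_neg hi, if_neg hj]
            exact hL' hij
      have hL''dom : ∀ m, G n m ≤ L'' m := by
        intro m
        by_cases hm : m < n
        · simp only [hL''def, if_pos hm]
          exact le_rfl
        · simp only [hL''def, if_neg hm]
          have hnm : n ≤ m := not_lt.mp hm
          calc G n m ≤ G m m := hGle n m hnm m
            _ ≤ G m (c m) := (hGm m).monotone (hcn m)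
            _ ≤ L' m := hLL' m
      have hsame : F.image L'' = F.image L' := by
        apply Finset.image_congr
        intro x hx
        have hxn : ¬ x < n := not_lt.mpr (hFlow x (Finset.mem_coe.mp hx))
        simp only [hL''def, if_neg hxn]
      have hE'' : E ∈ famOp (famMap L'' (SS.S (SS.seq ξ n))) (SS.S ζ) :=
        ⟨nb, Es, hGz2, hne2, hinc2, ⟨F, hFn, hsame.trans hFim2⟩, hEeq2⟩
      have hEmem : E ∈ SS.S (ζ + γ n) := hGP n L'' hL''m hL''dom hE''
      rw [SS.S_limit (ζ + ξ) hζη hl2]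
      refine ⟨p n, ?_, ?_⟩
      · intro a ha
        have h1 : L' n ≤ a := by
          rw [hEeq2] at ha
          exact mem_lower hL' hFim2 hFlow a ha
        have h2 : G n (c n) ≤ L' n := hLL' n
        have h3 : c n ≤ G n (c n) := (hGm n).le_apply
        have h4 := hcp n
        omega
      · rw [← hγeq n]
        exact hEmem

end Statement1Aux

/-- For countable ordinals `ξ, ζ < ω₁` and any infinite `M ⊆ ℕ`
(given by its increasing enumeration) there is an infinite `L ⊆ M` such that
`𝓢_ξ(L)[𝓢_ζ] ⊆ 𝓢_{ζ+ξ}`, and the inclusion persists when `L` is replaced by any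
spread `L'` of `L` (i.e. `L'` increasing with `L n ≤ L' n` for all `n`). -/
theorem statement1 (SS : SchreierSystem) (ξ ζ : Ordinal) (hξ : ξ < omega1) (hζ : ζ < omega1)
    (M : ℕ → ℕ) (hM : StrictMono M) :
    ∃ L : ℕ → ℕ, StrictMono L ∧ (∀ n : ℕ, L n ∈ Set.range M) ∧
      ∀ L' : ℕ → ℕ, StrictMono L' → (∀ n : ℕ, L n ≤ L' n) →
        famOp (famMap L' (SS.S ξ)) (SS.S ζ) ⊆ SS.S (ζ + ξ) := by
  exact Statement1Aux.master SS ζ hζ ξ hξ ξ le_rfl M hM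
end
end

section
/- Let 0 ≤ ξ, ζ < ω₁ be countable ordinals and let (F_i)_{i∈ℕ} be a successive sequence (F_1 < F_2 < ⋯) of members of 𝓢_ζ. Then there exists an infinite N ⊆ ℕ such that whenever E ∈ 𝓢_ξ(N), the union ∪_{i∈E} F_i belongs to 𝓢_{ζ+ξ}. -/
open Filter Topology

noncomputable section

/-! ### Auxiliary lemmas -/

lemma add_lt_omega1 {a b : Ordinal} (ha : a < omega1) (hb : b < omega1) : a + b < omega1 := by
  rw [omega1, Cardinal.lt_ord] at *
  rw [Ordinal.card_add]
  exact Cardinal.add_lt_of_lt (Cardinal.aleph0_le_aleph 1) ha hb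

lemma sInf_mem_finset {s : Finset ℕ} (hs : s.Nonempty) : sInf (↑s : Set ℕ) ∈ s :=
  Nat.sInf_mem (by exact_mod_cast hs.to_set)

lemma sInf_image_strictMonoOn {s : Finset ℕ} (hs : s.Nonempty) {g : ℕ → ℕ}
    (hg : StrictMonoOn g ↑s) :
    sInf (↑(s.image g) : Set ℕ) = g (sInf (↑s : Set ℕ)) := by
  have h0 : sInf (↑s : Set ℕ) ∈ s := sInf_mem_finset hs
  apply le_antisymm
  · exact Nat.sInf_le (Finset.mem_coe.mpr (Finset.mem_image_of_mem g h0))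
  · have h1 : sInf (↑(s.image g) : Set ℕ) ∈ s.image g := sInf_mem_finset (hs.image g)
    obtain ⟨a, ha, hae⟩ := Finset.mem_image.mp h1
    rw [← hae]
    exact hg.monotoneOn (Finset.mem_coe.mpr h0) (Finset.mem_coe.mpr ha)
      (Nat.sInf_le (Finset.mem_coe.mpr ha))

lemma succ_lt_self (γ : Ordinal) : γ < γ + 1 := by
  rw [Ordinal.add_one_eq_succ]; exact Order.lt_succ γ

/-- Schreier families are spreading. -/
lemma spread_mem (SS : SchreierSystem) :
    ∀ ξ : Ordinal, ξ < omega1 → ∀ E ∈ SS.S ξ, ∀ g : ℕ → ℕ,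
      StrictMonoOn g ↑E → (∀ a ∈ E, a ≤ g a) → E.image g ∈ SS.S ξ := by
  intro ξ
  induction ξ using Ordinal.induction with
  | _ ξ IH =>
  intro hξ E hE g hg hge
  rcases Ordinal.zero_or_succ_or_isSuccLimit ξ with h0 | ⟨γ, hγ⟩ | hlim
  · subst h0
    rw [SS.S_zero] at hE ⊢
    rcases hE with rfl | ⟨k, rfl⟩
    · left; simp
    · right; exact ⟨g k, by simp⟩
  · rw [← Ordinal.add_one_eq_succ] at hγ
    subst hγ
    have hγω : γ < omega1 := lt_trans (succ_lt_self γ) hξ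
    rw [SS.S_succ] at hE ⊢
    obtain ⟨n, Es, hmem, hne, hsuc, hmins, hEeq⟩ := hE
    have hsub : ∀ i, i < n → Es i ⊆ E := by
      intro i hi a ha
      rw [hEeq]; exact Finset.mem_biUnion.mpr ⟨i, Finset.mem_range.mpr hi, ha⟩
    refine ⟨n, fun i => (Es i).image g, ?_, ?_, ?_, ?_, ?_⟩
    · intro i hi
      exact IH γ (succ_lt_self γ) hγω (Es i) (hmem i hi) g
        (hg.mono (Finset.coe_subset.mpr (hsub i hi))) (fun a ha => hge a (hsub i hi ha))
    · intro i hi; exact (hne i hi).image g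
    · intro i j hij hj a ha b hb
      obtain ⟨a0, ha0, rfl⟩ := Finset.mem_image.mp ha
      obtain ⟨b0, hb0, rfl⟩ := Finset.mem_image.mp hb
      exact hg (Finset.mem_coe.mpr (hsub i (lt_trans hij hj) ha0))
        (Finset.mem_coe.mpr (hsub j hj hb0)) (hsuc i j hij hj a0 ha0 b0 hb0)
    · have heq : Finset.image (fun i => sInf ((((Es i).image g) : Finset ℕ) : Set ℕ))
          (Finset.range n)
          = (Finset.image (fun i => sInf ((Es i : Finset ℕ) : Set ℕ)) (Finset.range n)).image g := by
        rw [Finset.image_image]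
        apply Finset.image_congr
        intro i hi
        rw [Finset.mem_coe, Finset.mem_range] at hi
        exact sInf_image_strictMonoOn (hne i hi) (hg.mono (Finset.coe_subset.mpr (hsub i hi)))
      rw [heq]
      intro x hx
      obtain ⟨y, hy, rfl⟩ := Finset.mem_image.mp hx
      obtain ⟨i, hi, rfl⟩ := Finset.mem_image.mp hy
      rw [Finset.mem_range] at hi
      have hyE : sInf ((Es i : Finset ℕ) : Set ℕ) ∈ E := hsub i hi (sInf_mem_finset (hne i hi))
      exact le_trans Finset.card_image_le (le_trans (hmins _ hy) (hge _ hyE))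
    · rw [hEeq, Finset.biUnion_image]
  · rw [SS.S_limit ξ hξ hlim] at hE ⊢
    obtain ⟨n, hmin, hE'⟩ := hE
    refine ⟨n, ?_, IH (SS.seq ξ n) (SS.seq_lt ξ hξ hlim n)
      (lt_trans (SS.seq_lt ξ hξ hlim n) hξ) E hE' g hg hge⟩
    intro m hm
    obtain ⟨a, ha, rfl⟩ := Finset.mem_image.mp hm
    exact le_trans (hmin a ha) (hge a ha)

lemma empty_mem (SS : SchreierSystem) : ∀ ξ : Ordinal, ξ < omega1 → (∅ : Finset ℕ) ∈ SS.S ξ := by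
  intro ξ
  induction ξ using Ordinal.induction with
  | _ ξ IH =>
  intro hξ
  rcases Ordinal.zero_or_succ_or_isSuccLimit ξ with h0 | ⟨γ, hγ⟩ | hlim
  · subst h0; rw [SS.S_zero]; left; rfl
  · rw [← Ordinal.add_one_eq_succ] at hγ; subst hγ
    rw [SS.S_succ]
    refine ⟨0, fun _ => ∅, ?_, ?_, ?_, ?_, ?_⟩
    · intro i hi; omega
    · intro i hi; omega
    · intro i j hij hj; omega
    · intro x hx; simp at hx
    · simp
  · rw [SS.S_limit ξ hξ hlim]
    exact ⟨0, by simp, IH _ (SS.seq_lt ξ hξ hlim 0) (lt_trans (SS.seq_lt ξ hξ hlim 0) hξ)⟩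

lemma single_piece (SS : SchreierSystem) (γ : Ordinal) {E : Finset ℕ} (hE : E ∈ SS.S γ)
    (hne : E.Nonempty) (h1 : ∀ a ∈ E, 1 ≤ a) : E ∈ SS.S (γ + 1) := by
  rw [SS.S_succ]
  refine ⟨1, fun _ => E, fun i _ => hE, fun i _ => hne, ?_, ?_, ?_⟩
  · intro i j hij hj; omega
  · intro x hx
    have hcard : (Finset.image (fun _ : ℕ => sInf ((E : Finset ℕ) : Set ℕ))
        (Finset.range 1)).card ≤ 1 :=
      le_trans Finset.card_image_le (by simp)
    refine le_trans hcard ?_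
    simp only [Finset.range_one, Finset.image_singleton, Finset.mem_singleton] at hx
    subst hx
    exact h1 _ (sInf_mem_finset hne)
  · simp

lemma transfer (SS : SchreierSystem) : ∀ ξ : Ordinal, ξ < omega1 → ∀ η : Ordinal, η ≤ ξ →
    ∃ p : ℕ, ∀ E ∈ SS.S η, (∀ a ∈ E, p ≤ a) → E ∈ SS.S ξ := by
  intro ξ
  induction ξ using Ordinal.induction with
  | _ ξ IH =>
  intro hξ η hη
  rcases eq_or_lt_of_le hη with rfl | hη'
  · exact ⟨0, fun E hE _ => hE⟩
  rcases Ordinal.zero_or_succ_or_isSuccLimit ξ with h0 | ⟨γ, hγ⟩ | hlim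
  · subst h0; exact absurd hη' (not_lt_bot (a := η))
  · rw [← Ordinal.add_one_eq_succ] at hγ; subst hγ
    have hγω : γ < omega1 := lt_trans (succ_lt_self γ) hξ
    have hηγ : η ≤ γ := by
      rw [Ordinal.add_one_eq_succ] at hη'; exact Order.lt_succ_iff.mp hη'
    obtain ⟨p, hp⟩ := IH γ (succ_lt_self γ) hγω η hηγ
    refine ⟨p + 1, fun E hE hEa => ?_⟩
    rcases E.eq_empty_or_nonempty with rfl | hne
    · exact empty_mem SS _ hξ
    · exact single_piece SS γ (hp E hE (fun a ha => le_trans (Nat.le_succ p) (hEa a ha))) hne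
        (fun a ha => le_trans (by omega) (hEa a ha))
  · have hex : ∃ n, η < SS.seq ξ n := by
      by_contra hc
      push_neg at hc
      have : ξ ≤ η := by rw [← SS.seq_iSup ξ hξ hlim]; exact ciSup_le hc
      exact absurd hη' (not_lt.mpr this)
    obtain ⟨n, hn⟩ := hex
    have hseqω : SS.seq ξ n < omega1 := lt_trans (SS.seq_lt ξ hξ hlim n) hξ
    obtain ⟨p, hp⟩ := IH (SS.seq ξ n) (SS.seq_lt ξ hξ hlim n) hseqω η (le_of_lt hn)
    refine ⟨max p n, fun E hE hEa => ?_⟩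
    rw [SS.S_limit ξ hξ hlim]
    exact ⟨n, fun m hm => le_trans (le_max_right p n) (hEa m hm),
      hp E hE (fun a ha => le_trans (le_max_left p n) (hEa a ha))⟩

lemma improve (F : ℕ → Finset ℕ)
    (hFsucc : ∀ m n : ℕ, m < n → ∀ a ∈ F m, ∀ b ∈ F n, a < b)
    (N : ℕ → ℕ) (hN : StrictMono N) (t : ℕ → ℕ) :
    ∃ g : ℕ → ℕ, StrictMono g ∧ ∀ m, ∀ a ∈ F (N (g m)), t m ≤ a := by
  have claim : ∀ B T : ℕ, ∃ k, B ≤ k ∧ ∀ a ∈ F (N k), T ≤ a := by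
    intro B T
    by_cases h : ∀ j ≤ T, (F (N (B + j))).Nonempty
    · refine ⟨B + T, Nat.le_add_right B T, ?_⟩
      have aux : ∀ j, j ≤ T → ∀ a ∈ F (N (B + j)), j ≤ a := by
        intro j
        induction j with
        | zero => intro _ a _; exact Nat.zero_le a
        | succ k ihk =>
          intro hk a ha
          obtain ⟨b, hb⟩ := h k (by omega)
          have hba : b < a := hFsucc (N (B + k)) (N (B + (k + 1))) (hN (by omega)) b hb a ha
          have := ihk (by omega) b hb
          omega
      exact aux T le_rfl
    · push_neg at h
      obtain ⟨j, hj, hemp⟩ := h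
      refine ⟨B + j, Nat.le_add_right B j, ?_⟩
      rw [hemp]; intro a ha; simp at ha
  choose K hK1 hK2 using claim
  refine ⟨fun m => Nat.rec (K 0 (t 0)) (fun m ih => K (ih + 1) (t (m + 1))) m, ?_, ?_⟩
  · apply strictMono_nat_of_lt_succ
    intro m
    exact lt_of_lt_of_le (Nat.lt_succ_self _) (hK1 _ (t (m + 1)))
  · intro m
    cases m with
    | zero => exact hK2 0 (t 0)
    | succ k => exact hK2 _ (t (k + 1))

/-- The inductive property carried along levels in the limit-case construction. -/
def RecP (SS : SchreierSystem) (ζ : Ordinal) (F : ℕ → Finset ℕ) (P : ℕ → ℕ)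
    (η : Ordinal) (c : ℕ → ℕ) : Prop :=
  StrictMono c ∧ ∀ E ∈ SS.S η, (E.image (fun m => P (c m))).biUnion F ∈ SS.S (ζ + η)

lemma main_lemma (SS : SchreierSystem) (ζ : Ordinal) (hζ : ζ < omega1) (F : ℕ → Finset ℕ)
    (hFmem : ∀ i : ℕ, F i ∈ SS.S ζ)
    (hFsucc : ∀ m n : ℕ, m < n → ∀ a ∈ F m, ∀ b ∈ F n, a < b) :
    ∀ ξ : Ordinal, ξ < omega1 → ∀ P : ℕ → ℕ, StrictMono P →
      ∃ g : ℕ → ℕ, StrictMono g ∧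
        ∀ E ∈ SS.S ξ, (E.image (fun m => P (g m))).biUnion F ∈ SS.S (ζ + ξ) := by
  intro ξ
  induction ξ using Ordinal.induction with
  | _ ξ IH =>
  intro hξ P hP
  rcases Ordinal.zero_or_succ_or_isSuccLimit ξ with h0 | ⟨γ, hγ⟩ | hlim
  · -- zero case
    subst h0
    refine ⟨id, strictMono_id, ?_⟩
    intro E hE
    rw [SS.S_zero] at hE
    rw [add_zero]
    rcases hE with rfl | ⟨k, rfl⟩
    · simpa using empty_mem SS ζ hζ
    · simpa using hFmem (P k)
  · -- successor case
    rw [← Ordinal.add_one_eq_succ] at hγ; subst hγ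
    have hγω : γ < omega1 := lt_trans (succ_lt_self γ) hξ
    obtain ⟨g₀, hg₀, hW₀⟩ := IH γ (succ_lt_self γ) hγω P hP
    have hN₀ : StrictMono (fun m => P (g₀ m)) := hP.comp hg₀
    obtain ⟨g₁, hg₁, himp⟩ := improve F hFsucc (fun m => P (g₀ m)) hN₀ id
    refine ⟨fun m => g₀ (g₁ m), hg₀.comp hg₁, ?_⟩
    set N : ℕ → ℕ := fun m => P (g₀ (g₁ m)) with hNdef
    have hNmono : StrictMono N := hP.comp (hg₀.comp hg₁)
    have himp' : ∀ m, ∀ a ∈ F (N m), m ≤ a := fun m a ha => himp m a ha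
    have hW : ∀ E ∈ SS.S γ, (E.image N).biUnion F ∈ SS.S (ζ + γ) := by
      intro E hE
      have h1 : E.image g₁ ∈ SS.S γ :=
        spread_mem SS γ hγω E hE g₁ (hg₁.strictMonoOn _) (fun a _ => hg₁.le_apply)
      have h2 := hW₀ (E.image g₁) h1
      rw [Finset.image_image] at h2
      exact h2
    intro E hE
    show (E.image N).biUnion F ∈ SS.S (ζ + (γ + 1))
    rw [SS.S_succ γ] at hE
    obtain ⟨n, Es, hmem, hne, hsuc, hmins, hEeq⟩ := hE
    have hord : ζ + (γ + 1) = (ζ + γ) + 1 := by rw [add_assoc]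
    rw [hord, SS.S_succ]
    set G : ℕ → Finset ℕ := fun i => ((Es i).image N).biUnion F with hGdef
    have hGmem : ∀ i, i < n → G i ∈ SS.S (ζ + γ) := fun i hi => hW (Es i) (hmem i hi)
    have hGsuc : ∀ i j, i < j → j < n → ∀ a ∈ G i, ∀ b ∈ G j, a < b := by
      intro i j hij hj a ha b hb
      simp only [hGdef, Finset.mem_biUnion, Finset.mem_image] at ha hb
      obtain ⟨x, ⟨c, hc, rfl⟩, hax⟩ := ha
      obtain ⟨y, ⟨d, hd, rfl⟩, hby⟩ := hb
      exact hFsucc (N c) (N d) (hNmono (hsuc i j hij hj c hc d hd)) a hax b hby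
    have hEN : (E.image N).biUnion F = (Finset.range n).biUnion G := by
      rw [hEeq, Finset.biUnion_image, Finset.biUnion_biUnion]
    have hinf_mem : ∀ i, i < n → sInf ((Es i : Finset ℕ) : Set ℕ) ∈ Es i :=
      fun i hi => sInf_mem_finset (hne i hi)
    have hinj : Set.InjOn (fun i => sInf ((Es i : Finset ℕ) : Set ℕ)) (Finset.range n) := by
      intro i hi j hj hij
      rw [Finset.coe_range, Set.mem_Iio] at hi hj
      by_contra hne'
      rcases Nat.lt_or_ge i j with h | h
      · exact absurd hij (ne_of_lt (hsuc i j h hj _ (hinf_mem i hi) _ (hinf_mem j hj)))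
      · have h' : j < i := lt_of_le_of_ne h (Ne.symm hne')
        exact absurd hij.symm (ne_of_lt (hsuc j i h' hi _ (hinf_mem j hj) _ (hinf_mem i hi)))
    have hcard : (Finset.image (fun i => sInf ((Es i : Finset ℕ) : Set ℕ))
        (Finset.range n)).card = n := by
      rw [Finset.card_image_of_injOn hinj, Finset.card_range]
    have hn_le : ∀ i, i < n → n ≤ sInf ((Es i : Finset ℕ) : Set ℕ) := by
      intro i hi
      have hy : sInf ((Es i : Finset ℕ) : Set ℕ) ∈
          Finset.image (fun i => sInf ((Es i : Finset ℕ) : Set ℕ)) (Finset.range n) :=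
        Finset.mem_image_of_mem _ (Finset.mem_range.mpr hi)
      have := hmins _ hy
      rwa [hcard] at this
    set T : Finset ℕ := (Finset.range n).filter (fun i => (G i).Nonempty) with hTdef
    set M : ℕ := T.card with hMdef
    have heT : ∀ j : Fin M, T.orderEmbOfFin rfl j ∈ T := fun j => Finset.orderEmbOfFin_mem T rfl j
    set Es' : ℕ → Finset ℕ :=
      fun j => if h : j < M then G (T.orderEmbOfFin rfl ⟨j, h⟩) else ∅ with hEs'def
    have hT_spec : ∀ i ∈ T, i < n ∧ (G i).Nonempty := by
      intro i hi
      rw [hTdef, Finset.mem_filter, Finset.mem_range] at hi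
      exact hi
    refine ⟨M, Es', ?_, ?_, ?_, ?_, ?_⟩
    · intro j hj
      simp only [hEs'def]
      rw [dif_pos hj]
      exact hGmem _ (hT_spec _ (heT ⟨j, hj⟩)).1
    · intro j hj
      simp only [hEs'def]
      rw [dif_pos hj]
      exact (hT_spec _ (heT ⟨j, hj⟩)).2
    · intro i j hij hj a ha b hb
      have hi : i < M := lt_trans hij hj
      simp only [hEs'def] at ha hb
      rw [dif_pos hi] at ha
      rw [dif_pos hj] at hb
      exact hGsuc _ _ ((T.orderEmbOfFin rfl).strictMono (show (⟨i, hi⟩ : Fin M) < ⟨j, hj⟩ from hij))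
        (hT_spec _ (heT ⟨j, hj⟩)).1 a ha b hb
    · intro x hx
      obtain ⟨j, hjr, rfl⟩ := Finset.mem_image.mp hx
      rw [Finset.mem_range] at hjr
      have hcard2 : (Finset.image (fun j => sInf ((Es' j : Finset ℕ) : Set ℕ))
          (Finset.range M)).card ≤ M :=
        le_trans Finset.card_image_le (by simp)
      have hMn : M ≤ n := by
        rw [hMdef, hTdef]
        exact le_trans (Finset.card_filter_le _ _) (by simp)
      have hj' : Es' j = G (T.orderEmbOfFin rfl ⟨j, hjr⟩) := by
        simp only [hEs'def]; rw [dif_pos hjr]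
      have hiT := hT_spec _ (heT ⟨j, hjr⟩)
      set x : ℕ := sInf ((Es' j : Finset ℕ) : Set ℕ) with hxdef
      have hxmem : x ∈ Es' j := sInf_mem_finset (by rw [hj']; exact hiT.2)
      rw [hj'] at hxmem
      simp only [hGdef, Finset.mem_biUnion, Finset.mem_image] at hxmem
      obtain ⟨y, ⟨c, hc, rfl⟩, hxF⟩ := hxmem
      have h5 := himp' c _ hxF
      have h6 : n ≤ c := le_trans (hn_le _ hiT.1) (Nat.sInf_le (Finset.mem_coe.mpr hc))
      exact le_trans hcard2 (le_trans hMn (le_trans h6 h5))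
    · rw [hEN]
      ext x
      simp only [Finset.mem_biUnion, Finset.mem_range]
      constructor
      · rintro ⟨i, hi, hx⟩
        have hiT : i ∈ T := by
          rw [hTdef, Finset.mem_filter, Finset.mem_range]
          exact ⟨hi, ⟨x, hx⟩⟩
        have hirange : i ∈ Set.range (T.orderEmbOfFin rfl) := by
          rw [Finset.range_orderEmbOfFin]
          exact Finset.mem_coe.mpr hiT
        obtain ⟨j, hj⟩ := hirange
        refine ⟨j.1, j.2, ?_⟩
        simp only [hEs'def]
        rw [dif_pos j.2]
        have hje : T.orderEmbOfFin rfl ⟨j.1, j.2⟩ = i := by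
          rw [show (⟨j.1, j.2⟩ : Fin M) = j from rfl]; exact hj
        rw [hje]
        exact hx
      · rintro ⟨j, hj, hx⟩
        simp only [hEs'def] at hx
        rw [dif_pos hj] at hx
        exact ⟨_, (hT_spec _ (heT ⟨j, hj⟩)).1, hx⟩
  · -- limit case
    have hζξ : ζ + ξ < omega1 := add_lt_omega1 hζ hξ
    have hseqlt : ∀ n : ℕ, SS.seq ξ n < ξ := SS.seq_lt ξ hξ hlim
    have hseqω : ∀ n : ℕ, SS.seq ξ n < omega1 := fun n => lt_trans (hseqlt n) hξ
    have step' : ∀ (n : ℕ) (c : ℕ → ℕ), StrictMono c →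
        ∃ g : ℕ → ℕ, StrictMono g ∧ RecP SS ζ F P (SS.seq ξ n) (fun m => c (g m)) := by
      intro n c hc
      obtain ⟨g, hg, hgw⟩ := IH (SS.seq ξ n) (hseqlt n) (hseqω n) (fun m => P (c m)) (hP.comp hc)
      exact ⟨g, hg, hc.comp hg, hgw⟩
    obtain ⟨c₀, hc₀W⟩ : ∃ c, RecP SS ζ F P (SS.seq ξ 0) c := by
      obtain ⟨g, hg, h⟩ := step' 0 id strictMono_id
      exact ⟨_, h⟩
    have stepS : ∀ (n : ℕ) (c : {c : ℕ → ℕ // RecP SS ζ F P (SS.seq ξ n) c}),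
        ∃ g : ℕ → ℕ, StrictMono g ∧ RecP SS ζ F P (SS.seq ξ (n + 1)) (fun m => c.1 (g m)) :=
      fun n c => step' (n + 1) c.1 c.2.1
    choose gf hgf1 hgf2 using stepS
    let cum : ∀ n : ℕ, {c : ℕ → ℕ // RecP SS ζ F P (SS.seq ξ n) c} :=
      fun n => Nat.rec ⟨c₀, hc₀W⟩ (fun k ih => ⟨fun m => ih.1 (gf k ih m), hgf2 k ih⟩) n
    set gs : ℕ → ℕ → ℕ := fun n => gf n (cum n) with hgsdef
    have cum_succ : ∀ n, (cum (n + 1)).1 = fun m => (cum n).1 (gs n m) := fun n => rfl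
    have gs_mono : ∀ n, StrictMono (gs n) := fun n => hgf1 n (cum n)
    have cum_mono : ∀ n, StrictMono (cum n).1 := fun n => (cum n).2.1
    let dd : ℕ → ℕ → ℕ → ℕ :=
      fun n m => Nat.rec id (fun k ih => if n ≤ k then fun x => ih (gs k x) else id) m
    have dd_succ : ∀ n k, n ≤ k → dd n (k + 1) = fun x => dd n k (gs k x) := by
      intro n k h
      show (if n ≤ k then fun x => dd n k (gs k x) else id) = _
      rw [if_pos h]
    have dd_succ' : ∀ n k, ¬ n ≤ k → dd n (k + 1) = id := by
      intro n k h
      show (if n ≤ k then fun x => dd n k (gs k x) else id) = _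
      rw [if_neg h]
    have dd_self : ∀ n, dd n n = id := by
      intro n
      cases n with
      | zero => rfl
      | succ k => exact dd_succ' (k + 1) k (by omega)
    have dd_mono : ∀ n m, StrictMono (dd n m) := by
      intro n m
      induction m with
      | zero => exact strictMono_id
      | succ k ih =>
        by_cases h : n ≤ k
        · rw [dd_succ n k h]; exact ih.comp (gs_mono k)
        · rw [dd_succ' n k h]; exact strictMono_id
    have cum_dd : ∀ n m, n ≤ m → ∀ x, (cum m).1 x = (cum n).1 (dd n m x) := by
      intro n m hnm
      induction m, hnm using Nat.le_induction with
      | base => intro x; rw [dd_self]; rfl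
      | succ k hk ih =>
        intro x
        have h1 : (cum (k + 1)).1 x = (cum k).1 (gs k x) := rfl
        rw [h1, ih (gs k x), dd_succ n k hk]
    set gbig : ℕ → ℕ := fun m => (cum m).1 m with hgbigdef
    have gbig_mono : StrictMono gbig := by
      apply strictMono_nat_of_lt_succ
      intro m
      have h1 : gbig (m + 1) = (cum m).1 (gs m (m + 1)) := rfl
      rw [h1]
      exact cum_mono m (lt_of_lt_of_le (Nat.lt_succ_self m) (gs_mono m).le_apply)
    have hlevel : ∀ n : ℕ, ∀ E ∈ SS.S (SS.seq ξ n), (∀ a ∈ E, n ≤ a) →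
        (E.image (fun m => P (gbig m))).biUnion F ∈ SS.S (ζ + SS.seq ξ n) := by
      intro n E hE hEa
      set h : ℕ → ℕ := fun x => dd n x x with hhdef
      have hstep2 : ∀ k, n ≤ k → h k < h (k + 1) := by
        intro k hk
        have he : h (k + 1) = dd n k (gs k (k + 1)) := congrFun (dd_succ n k hk) (k + 1)
        rw [he]
        exact dd_mono n k (lt_of_lt_of_le (Nat.lt_succ_self k) (gs_mono k).le_apply)
      have key : ∀ a b, n ≤ a → a < b → h a < h b := by
        intro a b hna hab
        induction b, hab using Nat.le_induction with
        | base => exact hstep2 a hna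
        | succ k hk ih => exact lt_trans ih (hstep2 k (le_trans hna (by omega)))
      have hsm : StrictMonoOn h ↑E := by
        intro a ha b hb hab
        exact key a b (hEa a (Finset.mem_coe.mp ha)) hab
      have hge' : ∀ a ∈ E, a ≤ h a := fun a _ => (dd_mono n a).le_apply
      have h1 : E.image h ∈ SS.S (SS.seq ξ n) := spread_mem SS _ (hseqω n) E hE h hsm hge'
      have h2 := (cum n).2.2 (E.image h) h1
      rw [Finset.image_image] at h2
      have heq : E.image ((fun m => P ((cum n).1 m)) ∘ h) = E.image (fun m => P (gbig m)) := by
        apply Finset.image_congr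
        intro a ha
        show P ((cum n).1 (h a)) = P ((cum a).1 a)
        rw [cum_dd n a (hEa a (Finset.mem_coe.mp ha)) a]
      rw [heq] at h2
      exact h2
    have htr : ∀ n : ℕ, ∃ p : ℕ, ∀ E ∈ SS.S (ζ + SS.seq ξ n), (∀ a ∈ E, p ≤ a) →
        E ∈ SS.S (ζ + ξ) :=
      fun n => transfer SS (ζ + ξ) hζξ (ζ + SS.seq ξ n)
        (add_le_add_right (le_of_lt (hseqlt n)) ζ)
    choose pf hpf using htr
    set t : ℕ → ℕ := fun n => (Finset.range (n + 1)).sup pf with htdef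
    have ht_mono : Monotone t := fun a b hab =>
      Finset.sup_mono (Finset.range_subset_range.mpr (by omega))
    have ht_ge : ∀ n, pf n ≤ t n := fun n => Finset.le_sup (Finset.self_mem_range_succ n)
    set N : ℕ → ℕ := fun m => P (gbig m) with hNdef
    have hNmono : StrictMono N := hP.comp gbig_mono
    obtain ⟨g₂, hg₂, himp⟩ := improve F hFsucc N hNmono t
    refine ⟨fun m => gbig (g₂ m), gbig_mono.comp hg₂, ?_⟩
    intro E hE
    rw [SS.S_limit ξ hξ hlim] at hE
    obtain ⟨n, hmin, hEn⟩ := hE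
    have hE₂ : E.image g₂ ∈ SS.S (SS.seq ξ n) :=
      spread_mem SS _ (hseqω n) E hEn g₂ (hg₂.strictMonoOn _) (fun a _ => hg₂.le_apply)
    have hE₂a : ∀ a ∈ E.image g₂, n ≤ a := by
      intro a ha
      obtain ⟨b, hb, rfl⟩ := Finset.mem_image.mp ha
      exact le_trans (hmin b hb) hg₂.le_apply
    have h3 := hlevel n (E.image g₂) hE₂ hE₂a
    rw [Finset.image_image] at h3
    have heq2 : E.image ((fun m => P (gbig m)) ∘ g₂) = E.image (fun m => P (gbig (g₂ m))) := rfl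
    rw [heq2] at h3
    refine hpf n _ h3 ?_
    intro a ha
    simp only [Finset.mem_biUnion, Finset.mem_image] at ha
    obtain ⟨x, ⟨c, hc, rfl⟩, haF⟩ := ha
    have h4 := himp c a haF
    exact le_trans (ht_ge n) (le_trans (ht_mono (hmin c hc)) h4)

/-- For countable ordinals `ξ, ζ < ω₁` and a successive sequence
`F₁ < F₂ < ⋯` of members of `𝓢_ζ`, there is an infinite `N ⊆ ℕ` (given by its
increasing enumeration) such that whenever `E ∈ 𝓢_ξ(N)`, the union `⋃_{i∈E} F i`
belongs to `𝓢_{ζ+ξ}`. -/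
theorem statement3 (SS : SchreierSystem) (ξ ζ : Ordinal) (hξ : ξ < omega1) (hζ : ζ < omega1)
    (F : ℕ → Finset ℕ) (hFmem : ∀ i : ℕ, F i ∈ SS.S ζ)
    (hFsucc : ∀ m n : ℕ, m < n → ∀ a ∈ F m, ∀ b ∈ F n, a < b) :
    ∃ N : ℕ → ℕ, StrictMono N ∧
      ∀ E ∈ famMap N (SS.S ξ), E.biUnion F ∈ SS.S (ζ + ξ) := by
  obtain ⟨g, hg, hW⟩ := main_lemma SS ζ hζ F hFmem hFsucc ξ hξ id strictMono_id
  refine ⟨g, hg, ?_⟩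
  intro E hE
  obtain ⟨E₀, hE₀, rfl⟩ := hE
  exact hW E₀ hE₀
end
end
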